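/- (Key one-step implication for IHTC) Let Ψ ∈ ℝ^{n×p} have unit-norm columns with mutual coherence μ satisfying μ·s < 1/2, where x† ∈ ℝ^p has support A† with |A†| = s ≥ 1, and y = Ψ x† + η with ‖η‖₂ ≤ ε. Let C₀ > 1/(2(1 − 2μs)²), set α = (1 − 1/√(2C₀))/(μs), let γ ∈ [(2μs/(1 − 1/√(2C₀)))², 1), and let λ ≥ C₀ ε². If x ∈ ℝ^p satisfies supp(x) ⊂ A† and ‖x − x†‖_{ℓ∞} ≤ α √(2λ), then the one-step hard-thresholding update x⁺ = H_λ(x + Ψᵗ(y − Ψ x)) satisfies supp(x⁺) ⊂ A† and ‖x⁺ − x†‖_{ℓ∞} ≤ α √(2γλ). -/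

import Mathlib

open Finset Matrix

/-- The hard-thresholding operator `H_λ(t) = t` if `|t| > √(2λ)`, else `0`. -/
noncomputable def hardThresh (lam t : ℝ) : ℝ :=
  if Real.sqrt (2 * lam) < |t| then t else 0

/-- Key one-step implication for IHTC: under the mutual coherence condition `μs < 1/2`,
with `C₀ > 1/(2(1 − 2μs)²)`, `α = (1 − 1/√(2C₀))/(μs)`, `γ ∈ [(2μs/(1 − 1/√(2C₀)))², 1)`
and `λ ≥ C₀ε²`, if `supp(x) ⊂ A†` and `‖x − x†‖_{ℓ∞} ≤ α√(2λ)`, then the one-step update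
`x⁺ = H_λ(x + Ψᵗ(y − Ψx))` satisfies `supp(x⁺) ⊂ A†` and `‖x⁺ − x†‖_{ℓ∞} ≤ α√(2γλ)`. -/
theorem hard_step_key_implication {n p : ℕ} (Ψ : Matrix (Fin n) (Fin p) ℝ)
    (μ ε C₀ α γ lam : ℝ) (s : ℕ)
    (xdag : Fin p → ℝ) (η y : Fin n → ℝ) (Adag : Finset (Fin p))
    (hcol : ∀ i, ∑ k, Ψ k i ^ 2 = 1)
    (hcoh : ∀ i j, i ≠ j → |∑ k, Ψ k i * Ψ k j| ≤ μ) (hμpos : 0 < μ)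
    (hsuppdag : Function.support xdag = (Adag : Set (Fin p)))
    (hcard : Adag.card = s) (hs : 1 ≤ s) (hμs : μ * s < 1 / 2)
    (hy : y = Ψ.mulVec xdag + η)
    (hη : Real.sqrt (∑ k, η k ^ 2) ≤ ε)
    (hC : 1 / (2 * (1 - 2 * μ * s) ^ 2) < C₀)
    (hα : α = (1 - 1 / Real.sqrt (2 * C₀)) / (μ * s))
    (hγ : γ ∈ Set.Ico ((2 * μ * s / (1 - 1 / Real.sqrt (2 * C₀))) ^ 2) 1)
    (hlam : C₀ * ε ^ 2 ≤ lam)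
    (x : Fin p → ℝ)
    (hsupp : Function.support x ⊆ (Adag : Set (Fin p)))
    (hE : ‖x - xdag‖ ≤ α * Real.sqrt (2 * lam)) :
    Function.support
        (fun i => hardThresh lam (x i + Ψ.transpose.mulVec (y - Ψ.mulVec x) i))
      ⊆ (Adag : Set (Fin p)) ∧
    ‖(fun i => hardThresh lam (x i + Ψ.transpose.mulVec (y - Ψ.mulVec x) i)) - xdag‖
      ≤ α * Real.sqrt (2 * γ * lam) := by
  -- basic positivity facts
  have hspos : (0:ℝ) < s := by exact_mod_cast Nat.lt_of_lt_of_le Nat.zero_lt_one hs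
  have hμspos : 0 < μ * s := mul_pos hμpos hspos
  have h2μs : 2 * μ * s < 1 := by nlinarith
  have h2μspos : 0 < 2 * μ * s := by nlinarith
  have hden : 0 < 1 - 2 * μ * s := by linarith
  have hdensq : (1 - 2 * μ * s) ^ 2 ≤ 1 := by nlinarith
  have hC₀pos : 0 < C₀ := lt_trans (by positivity) hC
  have h2C₀ : 1 < 2 * C₀ := by
    have h1 : (1:ℝ) / 2 ≤ 1 / (2 * (1 - 2 * μ * s) ^ 2) := by
      apply one_div_le_one_div_of_le (by nlinarith) (by nlinarith)
    linarith
  have hsqrtC : 1 < Real.sqrt (2 * C₀) := by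
    rw [show (1:ℝ) = Real.sqrt 1 from (Real.sqrt_one).symm]
    exact Real.sqrt_lt_sqrt (by norm_num) h2C₀
  set c : ℝ := 1 / Real.sqrt (2 * C₀) with hc
  have hcpos : 0 < c := by positivity
  have hclt1 : c < 1 := by
    rw [hc, div_lt_one (by linarith)]; linarith
  have hαpos : 0 < α := by
    rw [hα]; apply div_pos (by linarith) hμspos
  have hμsα : μ * s * α = 1 - c := by
    rw [hα]; field_simp
  have hεnn : 0 ≤ ε := le_trans (Real.sqrt_nonneg _) hη
  have hlamnn : 0 ≤ lam := le_trans (by positivity) hlam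
  set B : ℝ := Real.sqrt (2 * lam) with hB
  have hBnn : 0 ≤ B := Real.sqrt_nonneg _
  -- ε ≤ c * B
  have hεle : ε ≤ c * B := by
    have h1 : c * B = Real.sqrt (lam / C₀) := by
      rw [hc, hB, one_div, ← Real.sqrt_inv, ← Real.sqrt_mul (by positivity)]
      congr 1
      field_simp
    rw [h1, show ε = Real.sqrt (ε ^ 2) by rw [Real.sqrt_sq hεnn]]
    apply Real.sqrt_le_sqrt
    rw [le_div_iff₀ hC₀pos]
    linarith
  -- coordinates outside Adag vanish
  have hx0 : ∀ j, j ∉ Adag → x j = 0 := by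
    intro j hj
    by_contra h
    exact hj (by exact_mod_cast hsupp h)
  have hxd0 : ∀ j, j ∉ Adag → xdag j = 0 := by
    intro j hj
    by_contra h
    have : j ∈ Function.support xdag := h
    rw [hsuppdag] at this
    exact hj (by exact_mod_cast this)
  -- coordinatewise error bound
  have he : ∀ j, |xdag j - x j| ≤ α * B := by
    intro j
    have h1 : |xdag j - x j| = ‖(x - xdag) j‖ := by
      simp [Real.norm_eq_abs, abs_sub_comm]
    rw [h1]
    exact le_trans (norm_le_pi_norm (x - xdag) j) hE
  -- Cauchy–Schwarz bound on noise correlation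
  have hinner : ∀ i, |∑ k, Ψ k i * η k| ≤ ε := by
    intro i
    have h1 : (∑ k, Ψ k i * η k) ^ 2 ≤ (∑ k, Ψ k i ^ 2) * ∑ k, η k ^ 2 :=
      Finset.sum_mul_sq_le_sq_mul_sq _ _ _
    rw [hcol i, one_mul] at h1
    calc |∑ k, Ψ k i * η k| = Real.sqrt ((∑ k, Ψ k i * η k) ^ 2) := by
          rw [Real.sqrt_sq_eq_abs]
      _ ≤ Real.sqrt (∑ k, η k ^ 2) := Real.sqrt_le_sqrt h1
      _ ≤ ε := hη
  -- decomposition of the gradient step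
  have key : ∀ i, x i + Ψ.transpose.mulVec (y - Ψ.mulVec x) i
      = xdag i + ((∑ j ∈ Adag.erase i, (∑ k, Ψ k i * Ψ k j) * (xdag j - x j))
        + ∑ k, Ψ k i * η k) := by
    intro i
    have h1 : ∀ k, (y - Ψ.mulVec x) k = (∑ j, Ψ k j * (xdag j - x j)) + η k := by
      intro k
      simp only [hy, Pi.sub_apply, Pi.add_apply, Matrix.mulVec, dotProduct, mul_sub,
        Finset.sum_sub_distrib]
      ring
    have h2 : Ψ.transpose.mulVec (y - Ψ.mulVec x) i
        = (∑ j, (∑ k, Ψ k i * Ψ k j) * (xdag j - x j)) + ∑ k, Ψ k i * η k := by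
      simp only [Matrix.mulVec, dotProduct, Matrix.transpose_apply]
      rw [Finset.sum_congr rfl fun k _ => by rw [h1 k, mul_add]]
      rw [Finset.sum_add_distrib]
      congr 1
      simp_rw [Finset.mul_sum]
      rw [Finset.sum_comm]
      simp_rw [Finset.sum_mul]
      congr 1; ext j; congr 1; ext k; ring
    have h3 : ∑ j, (∑ k, Ψ k i * Ψ k j) * (xdag j - x j)
        = (xdag i - x i) + ∑ j ∈ Finset.univ.erase i,
            (∑ k, Ψ k i * Ψ k j) * (xdag j - x j) := by
      rw [← Finset.add_sum_erase _ _ (Finset.mem_univ i)]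
      congr 1
      have : ∑ k, Ψ k i * Ψ k i = 1 := by
        rw [← hcol i]; congr 1; ext k; ring
      rw [this, one_mul]
    have h4 : ∑ j ∈ Finset.univ.erase i, (∑ k, Ψ k i * Ψ k j) * (xdag j - x j)
        = ∑ j ∈ Adag.erase i, (∑ k, Ψ k i * Ψ k j) * (xdag j - x j) := by
      symm
      apply Finset.sum_subset
      · intro j hj
        exact Finset.mem_erase.mpr ⟨(Finset.mem_erase.mp hj).1, Finset.mem_univ _⟩
      · intro j hju hj
        have hne : j ≠ i := (Finset.mem_erase.mp hju).1
        have hA : j ∉ Adag := fun hA => hj (Finset.mem_erase.mpr ⟨hne, hA⟩)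
        rw [hxd0 j hA, hx0 j hA]; ring
    rw [h2, h3, h4]; ring
  -- the perturbation bound
  set u : Fin p → ℝ := fun i => x i + Ψ.transpose.mulVec (y - Ψ.mulVec x) i with hu
  have hD : ∀ i, |u i - xdag i| ≤ B := by
    intro i
    have h1 : u i - xdag i = (∑ j ∈ Adag.erase i, (∑ k, Ψ k i * Ψ k j) * (xdag j - x j))
        + ∑ k, Ψ k i * η k := by
      rw [hu]; simp only []; rw [key i]; ring
    have h2 : |∑ j ∈ Adag.erase i, (∑ k, Ψ k i * Ψ k j) * (xdag j - x j)|
        ≤ (1 - c) * B := by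
      calc |∑ j ∈ Adag.erase i, (∑ k, Ψ k i * Ψ k j) * (xdag j - x j)|
          ≤ ∑ j ∈ Adag.erase i, |(∑ k, Ψ k i * Ψ k j) * (xdag j - x j)| :=
            Finset.abs_sum_le_sum_abs _ _
        _ ≤ ∑ _j ∈ Adag.erase i, μ * (α * B) := by
            apply Finset.sum_le_sum
            intro j hj
            rw [abs_mul]
            exact mul_le_mul (hcoh i j (Finset.mem_erase.mp hj).1.symm) (he j)
              (abs_nonneg _) (le_of_lt hμpos)
        _ = (Adag.erase i).card * (μ * (α * B)) := by
            rw [Finset.sum_const, nsmul_eq_mul]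
        _ ≤ s * (μ * (α * B)) := by
            apply mul_le_mul_of_nonneg_right _ (by positivity)
            have : (Adag.erase i).card ≤ s := by
              rw [← hcard]; exact Finset.card_erase_le
            exact_mod_cast this
        _ = (1 - c) * B := by
            rw [← hμsα]; ring
    calc |u i - xdag i| ≤ |∑ j ∈ Adag.erase i, (∑ k, Ψ k i * Ψ k j) * (xdag j - x j)|
          + |∑ k, Ψ k i * η k| := by rw [h1]; exact abs_add_le _ _
      _ ≤ (1 - c) * B + c * B := add_le_add h2 (le_trans (hinner i) hεle)
      _ = B := by ring
  -- support of the update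
  have hsupport : ∀ i, i ∉ Adag →
      hardThresh lam (x i + Ψ.transpose.mulVec (y - Ψ.mulVec x) i) = 0 := by
    intro i hi
    have h1 : |u i| ≤ B := by
      have := hD i
      rw [hxd0 i hi, sub_zero] at this
      exact this
    rw [hardThresh, if_neg (not_lt.mpr h1)]
  constructor
  · intro i hi
    by_contra h
    exact hi (hsupport i (by exact_mod_cast h))
  · -- the γ part
    have hγnn : 0 ≤ γ := le_trans (sq_nonneg _) hγ.1
    have hαγ : 2 ≤ α * Real.sqrt γ := by
      have h1 : 2 * μ * s / (1 - c) = 2 / α := by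
        rw [hα]; field_simp
      have h2 : 2 / α ≤ Real.sqrt γ := by
        rw [show (2:ℝ) / α = Real.sqrt ((2 / α) ^ 2) from
          (Real.sqrt_sq (by positivity)).symm]
        apply Real.sqrt_le_sqrt
        rw [← h1]
        exact hγ.1
      calc (2:ℝ) = α * (2 / α) := by field_simp
        _ ≤ α * Real.sqrt γ := by
            exact mul_le_mul_of_nonneg_left h2 (le_of_lt hαpos)
    have hsplit : Real.sqrt (2 * γ * lam) = Real.sqrt γ * B := by
      rw [hB, ← Real.sqrt_mul hγnn]
      congr 1; ring
    rw [pi_norm_le_iff_of_nonneg (by positivity)]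
    intro i
    rw [Pi.sub_apply, Real.norm_eq_abs]
    have hbound : α * Real.sqrt (2 * γ * lam) = α * Real.sqrt γ * B := by
      rw [hsplit]; ring
    rw [hbound]
    have h2B : 2 * B ≤ α * Real.sqrt γ * B := mul_le_mul_of_nonneg_right hαγ hBnn
    by_cases hif : Real.sqrt (2 * lam) < |x i + Ψ.transpose.mulVec (y - Ψ.mulVec x) i|
    · simp only [hardThresh, if_pos hif]
      calc |x i + Ψ.transpose.mulVec (y - Ψ.mulVec x) i - xdag i| ≤ B := hD i
        _ ≤ α * Real.sqrt γ * B := by linarith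
    · simp only [hardThresh, if_neg hif]
      have h1 : |u i| ≤ B := not_lt.mp hif
      calc |0 - xdag i| = |u i - (u i - xdag i)| := by rw [show u i - (u i - xdag i) = xdag i from by ring, zero_sub, abs_neg]
        _ ≤ |u i| + |u i - xdag i| := abs_sub _ _
        _ ≤ B + B := add_le_add h1 (hD i)
        _ ≤ α * Real.sqrt γ * B := by linarith
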